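/- Let d ≥ 2 and suppose N ∈ ℕ satisfies C(N+d−1, d−1) + C(N+d−2, d−1) < M for some integer M. If Λ ⊂ ℝ^d is a set of M points all lying on a common sphere centered at the origin, then there exists a nonzero exponential polynomial u(x) = ∑_{k∈Λ} c_k e^{ik·x} all of whose partial derivatives of order ≤ N vanish at the origin. -/

import Mathlib

open Finset

lemma ms_card_sum {α β : Type*} (s : Finset β) (f : β → Multiset α) :
    Multiset.card (∑ j ∈ s, f j) = ∑ j ∈ s, Multiset.card (f j) := by
  classical
  induction s using Finset.cons_induction with
  | empty => simp
  | cons a s ha ih => simp [Finset.sum_cons, ih]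

-- counting helper: tuples with fixed value at i0 and bounded sum off i0
lemma aux_count {d : ℕ} (B : ℕ) (i0 : Fin d) (v : ℕ)
    (S : Finset (Fin d → ℕ))
    (hS : ∀ β ∈ S, (∑ j ∈ univ.erase i0, β j) ≤ B ∧ β i0 = v) :
    S.card ≤ (d + B - 1).choose B := by
  classical
  have hcard : ∀ β ∈ S, Multiset.card
      (Multiset.replicate (B - ∑ j ∈ univ.erase i0, β j) i0
        + ∑ j ∈ univ.erase i0, Multiset.replicate (β j) j) = B := by
    intro β hβ
    obtain ⟨h1, _⟩ := hS β hβ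
    simp only [Multiset.card_add, Multiset.card_replicate, ms_card_sum]
    omega
  have hle : S.card ≤ (Finset.univ.image (fun s : Sym (Fin d) B => (s : Multiset (Fin d)))).card := by
    apply Finset.card_le_card_of_injOn
      (fun β => Multiset.replicate (B - ∑ j ∈ univ.erase i0, β j) i0
        + ∑ j ∈ univ.erase i0, Multiset.replicate (β j) j)
    · intro β hβ
      exact Finset.mem_image.2 ⟨⟨_, hcard β hβ⟩, Finset.mem_univ _, rfl⟩
    · intro β hβ β' hβ' heq
      funext j
      by_cases hj : j = i0
      · subst hj; rw [(hS β hβ).2, (hS β' hβ').2]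
      · have key : ∀ γ : Fin d → ℕ, Multiset.count j
            (Multiset.replicate (B - ∑ i ∈ univ.erase i0, γ i) i0
              + ∑ i ∈ univ.erase i0, Multiset.replicate (γ i) i) = γ j := by
          intro γ
          rw [Multiset.count_add, Multiset.count_replicate, Multiset.count_sum']
          simp only [Multiset.count_replicate]
          rw [if_neg (fun h => hj h.symm)]
          rw [Finset.sum_ite_eq' (univ.erase i0) j γ, if_pos (by simp [hj])]
          simp
        have := congrArg (Multiset.count j) heq
        rwa [key β, key β'] at this
  refine hle.trans ?_
  rw [Finset.card_image_of_injective _ (fun a b h => Sym.coe_injective h)]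
  simp [Sym.card_sym_eq_choose, Fintype.card_fin]
lemma choose_flip {d B : ℕ} (hd : 1 ≤ d) :
    (d + B - 1).choose B = (B + d - 1).choose (d - 1) := by
  rw [show d + B - 1 = B + d - 1 by omega,
    ← Nat.choose_symm (show d - 1 ≤ B + d - 1 by omega),
    show B + d - 1 - (d - 1) = B by omega]

lemma count_main {d : ℕ} (N : ℕ) (hd : 1 ≤ d) (i0 : Fin d)
    (S : Finset (Fin d → ℕ))
    (hS : ∀ β ∈ S, (∑ j, β j) ≤ N ∧ β i0 ≤ 1) :
    S.card ≤ (N + d - 1).choose (d - 1) + (N + d - 2).choose (d - 1) := by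
  classical
  have herase : ∀ β : Fin d → ℕ, (∑ j, β j) = β i0 + ∑ j ∈ univ.erase i0, β j := by
    intro β
    rw [← Finset.add_sum_erase _ β (Finset.mem_univ i0)]
  have hsplit : S = S.filter (fun β => β i0 = 0) ∪ S.filter (fun β => β i0 = 1) := by
    ext β
    simp only [Finset.mem_union, Finset.mem_filter]
    constructor
    · intro hβ
      have := (hS β hβ).2
      interval_cases h : β i0 <;> simp [hβ, h]
    · rintro (⟨h, _⟩ | ⟨h, _⟩) <;> exact h
  have harg0 : ∀ β ∈ S.filter (fun β => β i0 = 0),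
      (∑ j ∈ univ.erase i0, β j) ≤ N ∧ β i0 = 0 := by
    intro β hβ
    rw [Finset.mem_filter] at hβ
    refine ⟨?_, hβ.2⟩
    have h1 := (hS β hβ.1).1
    rw [herase β, hβ.2] at h1
    omega
  have hemp : N = 0 → S.filter (fun β => β i0 = 1) = ∅ := by
    intro hN
    rw [Finset.filter_eq_empty_iff]
    intro β hβ h
    have h1 := (hS β hβ).1
    rw [herase β, h, hN] at h1
    omega
  have harg1 : ∀ β ∈ S.filter (fun β => β i0 = 1),
      (∑ j ∈ univ.erase i0, β j) ≤ N - 1 ∧ β i0 = 1 := by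
    intro β hβ
    rw [Finset.mem_filter] at hβ
    refine ⟨?_, hβ.2⟩
    have h1 := (hS β hβ.1).1
    rw [herase β, hβ.2] at h1
    omega
  have e2 : 1 ≤ N → N - 1 + d - 1 = N + d - 2 := by omega
  have h0 : (S.filter (fun β => β i0 = 0)).card ≤ (N + d - 1).choose (d - 1) :=
    (aux_count N i0 0 _ harg0).trans_eq (choose_flip hd)
  have h1 : (S.filter (fun β => β i0 = 1)).card ≤ (N + d - 2).choose (d - 1) := by
    rcases Nat.eq_zero_or_pos N with hN | hN
    · rw [hemp hN]
      simp
    · refine (aux_count (N - 1) i0 1 _ harg1).trans_eq ?_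
      rw [choose_flip hd, e2 hN]
  calc S.card ≤ (S.filter (fun β => β i0 = 0) ∪ S.filter (fun β => β i0 = 1)).card := by
        rw [← hsplit]
    _ ≤ _ := (Finset.card_union_le _ _).trans (add_le_add h0 h1)
lemma exists_kernel {ι κ : Type*} [Fintype ι] [Fintype κ] [DecidableEq ι]
    (hlt : Fintype.card κ < Fintype.card ι) (A : ι → κ → ℂ) :
    ∃ c : ι → ℂ, c ≠ 0 ∧ ∀ j, ∑ i, c i * A i j = 0 := by
  let L : (ι → ℂ) →ₗ[ℂ] (κ → ℂ) :=
    { toFun := fun c j => ∑ i, c i * A i j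
      map_add' := by
        intro x y
        funext j
        simp [add_mul, Finset.sum_add_distrib]
      map_smul' := by
        intro m x
        funext j
        simp [Finset.mul_sum, mul_assoc] }
  have hni : ¬ Function.Injective L := by
    intro hinj
    have := LinearMap.finrank_le_finrank_of_injective hinj
    rw [Module.finrank_pi, Module.finrank_pi] at this
    omega
  rw [Function.not_injective_iff] at hni
  obtain ⟨x, y, hxy, hne⟩ := hni
  refine ⟨x - y, sub_ne_zero.2 hne, fun j => ?_⟩
  have : L (x - y) = 0 := by rw [map_sub, hxy, sub_self]
  have := congrFun this j
  simpa [L, sub_mul, Finset.sum_sub_distrib] using this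
lemma prod_pow_update {d : ℕ} (f : Fin d → ℂ) (γ : Fin d → ℕ) (j : Fin d) (m : ℕ) :
    ∏ i, f i ^ (Function.update γ j (γ j + m) i) = f j ^ m * ∏ i, f i ^ γ i := by
  classical
  rw [← Finset.mul_prod_erase univ (fun i => f i ^ (Function.update γ j (γ j + m) i))
      (Finset.mem_univ j),
    ← Finset.mul_prod_erase univ (fun i => f i ^ γ i) (Finset.mem_univ j)]
  rw [Finset.prod_congr rfl (fun i hi => by
    rw [Function.update_of_ne (Finset.ne_of_mem_erase hi)])]
  rw [Function.update_self, pow_add]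
  ring

lemma sum_update {d : ℕ} (γ : Fin d → ℕ) (j : Fin d) (m : ℕ) :
    ∑ i, (Function.update γ j m i) = m + ∑ i ∈ univ.erase j, γ i := by
  classical
  rw [← Finset.add_sum_erase _ _ (Finset.mem_univ j), Function.update_self]
  congr 1
  exact Finset.sum_congr rfl (fun i hi => Function.update_of_ne (Finset.ne_of_mem_erase hi) _ _)

lemma reduce {d : ℕ} (i0 : Fin d) (Λ : Finset (Fin d → ℝ)) (lam : ℝ)
    (hs : ∀ k ∈ Λ, ∑ j, (k j) ^ 2 = lam ^ 2) (C : (Fin d → ℝ) → ℂ) (N : ℕ)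
    (h0 : ∀ β : Fin d → ℕ, (∑ j, β j) ≤ N → β i0 ≤ 1 →
      ∑ k ∈ Λ, C k * ∏ j, ((k j : ℝ) : ℂ) ^ (β j) = 0) :
    ∀ β : Fin d → ℕ, (∑ j, β j) ≤ N →
      ∑ k ∈ Λ, C k * ∏ j, ((k j : ℝ) : ℂ) ^ (β j) = 0 := by
  classical
  suffices H : ∀ b : ℕ, ∀ β : Fin d → ℕ, β i0 ≤ b → (∑ j, β j) ≤ N →
      ∑ k ∈ Λ, C k * ∏ j, ((k j : ℝ) : ℂ) ^ (β j) = 0 by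
    exact fun β hβ => H (β i0) β le_rfl hβ
  intro b
  induction b using Nat.strong_induction_on with
  | _ b ih =>
    intro β hb hβ
    by_cases h1 : β i0 ≤ 1
    · exact h0 β hβ h1
    · push_neg at h1
      set β' := Function.update β i0 (β i0 - 2) with hβ'def
      have hββ' : β = Function.update β' i0 (β' i0 + 2) := by
        funext i
        by_cases hi : i = i0
        · subst hi
          simp only [β', Function.update_self]
          omega
        · simp [β', Function.update_of_ne hi]
      have hsum' : ∑ j, β' j + 2 = ∑ j, β j := by
        rw [sum_update, ← Finset.add_sum_erase _ β (Finset.mem_univ i0)]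
        omega
      -- sphere identity in ℂ
      have hsph : ∀ k ∈ Λ, ((k i0 : ℝ) : ℂ) ^ 2
          = (lam : ℂ) ^ 2 - ∑ j ∈ univ.erase i0, ((k j : ℝ) : ℂ) ^ 2 := by
        intro k hk
        have hr : (k i0) ^ 2 = lam ^ 2 - ∑ j ∈ univ.erase i0, (k j) ^ 2 := by
          have := hs k hk
          rw [← Finset.add_sum_erase _ (fun j => (k j) ^ 2) (Finset.mem_univ i0)] at this
          linarith
        calc ((k i0 : ℝ) : ℂ) ^ 2 = (((k i0) ^ 2 : ℝ) : ℂ) := by push_cast; ring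
          _ = ((lam ^ 2 - ∑ j ∈ univ.erase i0, (k j) ^ 2 : ℝ) : ℂ) := by rw [hr]
          _ = _ := by push_cast; ring
      -- expand
      have key : ∀ k ∈ Λ, C k * ∏ j, ((k j : ℝ) : ℂ) ^ (β j)
          = (lam : ℂ) ^ 2 * (C k * ∏ j, ((k j : ℝ) : ℂ) ^ (β' j))
            - ∑ j ∈ univ.erase i0,
                C k * ∏ i, ((k i : ℝ) : ℂ) ^ (Function.update β' j (β' j + 2) i) := by
        intro k hk
        have e1 : ∏ j, ((k j : ℝ) : ℂ) ^ (β j)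
            = ((k i0 : ℝ) : ℂ) ^ 2 * ∏ j, ((k j : ℝ) : ℂ) ^ (β' j) := by
          conv_lhs => rw [hββ']
          exact prod_pow_update _ _ _ _
        have e2 : ∀ j, ∏ i, ((k i : ℝ) : ℂ) ^ (Function.update β' j (β' j + 2) i)
            = ((k j : ℝ) : ℂ) ^ 2 * ∏ i, ((k i : ℝ) : ℂ) ^ (β' i) :=
          fun j => prod_pow_update _ _ _ _
        have e3 : ∑ j ∈ univ.erase i0,
            C k * ∏ i, ((k i : ℝ) : ℂ) ^ (Function.update β' j (β' j + 2) i)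
            = (∑ j ∈ univ.erase i0, ((k j : ℝ) : ℂ) ^ 2)
              * (C k * ∏ i, ((k i : ℝ) : ℂ) ^ (β' i)) := by
          rw [Finset.sum_mul]
          refine Finset.sum_congr rfl (fun j _ => ?_)
          rw [e2 j]; ring
        rw [e1, hsph k hk, e3]
        ring
      rw [Finset.sum_congr rfl key, Finset.sum_sub_distrib, ← Finset.mul_sum]
      have hlt : β i0 - 2 < b := by omega
      have hz1 : ∑ k ∈ Λ, C k * ∏ j, ((k j : ℝ) : ℂ) ^ (β' j) = 0 := by
        apply ih (β i0 - 2) hlt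
        · simp [β', Function.update_self]
        · omega
      rw [hz1, mul_zero, zero_sub, neg_eq_zero, Finset.sum_comm]
      apply Finset.sum_eq_zero
      intro j hj
      apply ih (β i0 - 2) hlt
      · rw [Function.update_of_ne (Finset.ne_of_mem_erase hj).symm]
        simp [β', Function.update_self]
      · rw [sum_update]
        have : ∑ i ∈ univ.erase j, β' i = ∑ i, β' i - β' j := by
          rw [← Finset.add_sum_erase _ β' (Finset.mem_univ j)]
          omega
        have hle := Finset.single_le_sum (f := β') (fun i _ => Nat.zero_le _) (Finset.mem_univ j)
        omega
noncomputable def Lc {d : ℕ} (k : Fin d → ℝ) : (Fin d → ℝ) →L[ℝ] ℂ :=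
  Complex.ofRealCLM.comp (∑ j, (k j) • (ContinuousLinearMap.proj j : (Fin d → ℝ) →L[ℝ] ℝ))

lemma Lc_apply {d : ℕ} (k x : Fin d → ℝ) : Lc k x = ((∑ j, k j * x j : ℝ) : ℂ) := by
  simp [Lc, ContinuousLinearMap.sum_apply, smul_eq_mul]

noncomputable def Mc {d : ℕ} (k : Fin d → ℝ) (n : ℕ) :
    ContinuousMultilinearMap ℝ (fun _ : Fin n => (Fin d → ℝ)) ℂ :=
  (ContinuousMultilinearMap.mkPiAlgebraFin ℝ n ℂ).compContinuousLinearMap (fun _ => Lc k)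

lemma Mc_apply {d : ℕ} (k : Fin d → ℝ) (n : ℕ) (v : Fin n → (Fin d → ℝ)) :
    Mc k n v = ∏ i, Lc k (v i) := by
  simp [Mc, ContinuousMultilinearMap.compContinuousLinearMap_apply,
    ContinuousMultilinearMap.mkPiAlgebraFin_apply, List.prod_ofFn]

lemma taylor_main {d : ℕ} (Λ : Finset (Fin d → ℝ)) (C : (Fin d → ℝ) → ℂ) :
    HasFTaylorSeriesUpTo ⊤ (fun x => ∑ k ∈ Λ, C k * Complex.exp (Complex.I * Lc k x))
      (fun x n => ∑ k ∈ Λ, (C k * Complex.exp (Complex.I * Lc k x)) • (Complex.I ^ n • Mc k n)) := by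
  constructor
  · intro x
    rw [ContinuousMultilinearMap.curry0_apply]
    rw [ContinuousMultilinearMap.sum_apply]
    refine Finset.sum_congr rfl (fun k _ => ?_)
    rw [ContinuousMultilinearMap.smul_apply, ContinuousMultilinearMap.smul_apply, Mc_apply]
    simp
  · intro m _ x
    have hder : ∀ k ∈ Λ, HasFDerivAt
        (fun y => (C k * Complex.exp (Complex.I * Lc k y)) • (Complex.I ^ m • Mc k m))
        ((((C k * Complex.exp (Complex.I * Lc k x)) * Complex.I) • (Lc k)).smulRight
          (Complex.I ^ m • Mc k m)) x := by
      intro k _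
      have h1 : HasFDerivAt (fun y => Complex.I * Lc k y) (Complex.I • Lc k) x :=
        ((Lc k).hasFDerivAt).const_mul Complex.I
      have h2 := h1.cexp
      have h3 := h2.const_mul (C k)
      have h4 := h3.smul_const (Complex.I ^ m • Mc k m)
      refine h4.congr_fderiv ?_
      ext v
      simp only [ContinuousLinearMap.smulRight_apply, ContinuousLinearMap.smul_apply]
      congr 1
      simp [smul_eq_mul]
      ring
    refine HasFDerivAt.congr_fderiv (HasFDerivAt.fun_sum hder) ?_
    ext v w
    rw [ContinuousLinearMap.sum_apply, ContinuousMultilinearMap.sum_apply]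
    rw [ContinuousMultilinearMap.curryLeft_apply, ContinuousMultilinearMap.sum_apply]
    refine Finset.sum_congr rfl (fun k _ => ?_)
    rw [ContinuousLinearMap.smulRight_apply, ContinuousLinearMap.smul_apply,
      ContinuousMultilinearMap.smul_apply, ContinuousMultilinearMap.smul_apply,
      ContinuousMultilinearMap.smul_apply, ContinuousMultilinearMap.smul_apply,
      Mc_apply, Mc_apply]
    rw [Fin.prod_univ_succ, pow_succ]
    simp only [Fin.cons_zero, Fin.cons_succ, smul_eq_mul]
    ring
  · intro m _
    apply continuous_finset_sum
    intro k _
    exact ((continuous_const.mul (Complex.continuous_exp.comp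
      (continuous_const.mul (Lc k).continuous))).smul continuous_const)
-- the derivative-vanishing step, given vanishing moments
lemma deriv_vanish {d : ℕ} (Λ : Finset (Fin d → ℝ)) (C : (Fin d → ℝ) → ℂ) (N : ℕ)
    (hmom : ∀ β : Fin d → ℕ, (∑ j, β j) ≤ N →
      ∑ k ∈ Λ, C k * ∏ j, ((k j : ℝ) : ℂ) ^ (β j) = 0)
    (n : ℕ) (hn : n ≤ N) :
    iteratedFDeriv ℝ n
      (fun x : Fin d → ℝ => ∑ k ∈ Λ, C k *
        Complex.exp (Complex.I * ((∑ j, k j * x j : ℝ) : ℂ))) 0 = 0 := by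
  classical
  have hu : (fun x : Fin d → ℝ => ∑ k ∈ Λ, C k *
        Complex.exp (Complex.I * ((∑ j, k j * x j : ℝ) : ℂ)))
      = (fun x => ∑ k ∈ Λ, C k * Complex.exp (Complex.I * Lc k x)) := by
    funext x
    exact Finset.sum_congr rfl (fun k _ => by rw [Lc_apply])
  rw [hu, ← (taylor_main Λ C).eq_iteratedFDeriv le_top 0]
  ext w
  rw [ContinuousMultilinearMap.sum_apply]
  have hzero : ∀ k : Fin d → ℝ, Lc k (0 : Fin d → ℝ) = 0 := fun k => map_zero _
  have step1 : ∀ k ∈ Λ, ((C k * Complex.exp (Complex.I * Lc k 0)) •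
      (Complex.I ^ n • Mc k n)) w = Complex.I ^ n * (C k * ∏ i, Lc k (w i)) := by
    intro k _
    rw [ContinuousMultilinearMap.smul_apply, ContinuousMultilinearMap.smul_apply, Mc_apply,
      hzero k]
    simp [smul_eq_mul]
    ring
  rw [Finset.sum_congr rfl step1, ← Finset.mul_sum]
  have key : ∑ k ∈ Λ, C k * ∏ i, Lc k (w i) = 0 := by
    have expand : ∀ k : Fin d → ℝ, (∏ i, Lc k (w i))
        = ∑ g ∈ Fintype.piFinset (fun _ : Fin n => (univ : Finset (Fin d))),
            (∏ i, ((k (g i) : ℝ) : ℂ)) * (∏ i, ((w i (g i) : ℝ) : ℂ)) := by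
      intro k
      have e1 : ∀ i : Fin n, Lc k (w i) = ∑ j, ((k j : ℝ) : ℂ) * ((w i j : ℝ) : ℂ) := by
        intro i
        rw [Lc_apply]
        push_cast
        rfl
      rw [Finset.prod_congr rfl (fun i _ => e1 i), Finset.prod_univ_sum]
      exact Finset.sum_congr rfl (fun g _ => by rw [Finset.prod_mul_distrib])
    rw [Finset.sum_congr rfl (fun k _ => by rw [expand k, Finset.mul_sum])]
    rw [Finset.sum_comm]
    apply Finset.sum_eq_zero
    intro g _
    have fib : ∀ k : Fin d → ℝ, (∏ i, ((k (g i) : ℝ) : ℂ))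
        = ∏ j, ((k j : ℝ) : ℂ) ^ ((univ.filter fun i => g i = j).card) := by
      intro k
      rw [← Finset.prod_fiberwise univ g (fun i => ((k (g i) : ℝ) : ℂ))]
      refine Finset.prod_congr rfl (fun j _ => ?_)
      rw [Finset.prod_congr rfl (fun i hi => by rw [(Finset.mem_filter.1 hi).2]),
        Finset.prod_const]
    have hsum : (∑ j, (univ.filter fun i => g i = j).card) = n := by
      rw [← Finset.card_eq_sum_card_fiberwise (fun i _ => Finset.mem_univ (g i))]
      simp
    have := hmom (fun j => (univ.filter fun i => g i = j).card) (by rw [hsum]; exact hn)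
    calc ∑ k ∈ Λ, C k * ((∏ i, ((k (g i) : ℝ) : ℂ)) * (∏ i, ((w i (g i) : ℝ) : ℂ)))
        = (∏ i, ((w i (g i) : ℝ) : ℂ)) * ∑ k ∈ Λ, C k * ∏ j, ((k j : ℝ) : ℂ)
            ^ ((univ.filter fun i => g i = j).card) := by
          rw [Finset.mul_sum]
          exact Finset.sum_congr rfl (fun k _ => by rw [fib k]; ring)
      _ = 0 := by rw [this, mul_zero]
  rw [key, mul_zero]
  rfl

/-- If `C(N+d-1, d-1) + C(N+d-2, d-1) < M` and `Λ` is a set of `M` points on a common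
sphere centered at the origin, then some nonzero exponential polynomial with
frequencies in `Λ` has all derivatives of order `≤ N` vanishing at the origin. -/
theorem stmt18 (d : ℕ) (hd : 2 ≤ d) (N M : ℕ)
    (hNM : (N + d - 1).choose (d - 1) + (N + d - 2).choose (d - 1) < M)
    (Λ : Finset (Fin d → ℝ)) (hcard : Λ.card = M)
    (lam : ℝ) (hsphere : ∀ k ∈ Λ, ∑ j, (k j) ^ 2 = lam ^ 2) :
    ∃ c : (Fin d → ℝ) → ℂ, (∃ k ∈ Λ, c k ≠ 0) ∧
      ∀ n : ℕ, n ≤ N →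
        iteratedFDeriv ℝ n
          (fun x : Fin d → ℝ => ∑ k ∈ Λ, c k *
            Complex.exp (Complex.I * ((∑ j, k j * x j : ℝ) : ℂ))) 0 = 0 := by
  classical
  set i0 : Fin d := ⟨0, by omega⟩ with hi0
  set Sfin : Finset (Fin d → ℕ) :=
    ((Finset.range (N + 1)).biUnion (fun n => Finset.Nat.antidiagonalTuple d n)).filter
      (fun β => β i0 ≤ 1) with hSfin
  have hmem : ∀ β : Fin d → ℕ, β ∈ Sfin ↔ ((∑ j, β j) ≤ N ∧ β i0 ≤ 1) := by
    intro β
    simp only [hSfin, Finset.mem_filter, Finset.mem_biUnion, Finset.mem_range,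
      Finset.Nat.mem_antidiagonalTuple]
    constructor
    · rintro ⟨⟨a, ha, hae⟩, h2⟩
      exact ⟨hae ▸ Nat.lt_succ_iff.1 ha, h2⟩
    · rintro ⟨h1, h2⟩
      exact ⟨⟨∑ j, β j, Nat.lt_succ_iff.2 h1, rfl⟩, h2⟩
  have hcount : Sfin.card < M :=
    lt_of_le_of_lt (count_main N (by omega) i0 Sfin (fun β hβ => (hmem β).1 hβ)) hNM
  have hcards : Fintype.card ↥Sfin < Fintype.card ↥Λ := by
    rw [Fintype.card_coe, Fintype.card_coe, hcard]
    exact hcount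
  obtain ⟨c, hc0, hker⟩ := exists_kernel hcards
    (fun (k : ↥Λ) (β : ↥Sfin) => ∏ j, (((k : Fin d → ℝ) j : ℝ) : ℂ) ^ ((β : Fin d → ℕ) j))
  set C : (Fin d → ℝ) → ℂ := fun k => if h : k ∈ Λ then c ⟨k, h⟩ else 0 with hC
  have hCΛ : ∀ (k : Fin d → ℝ) (h : k ∈ Λ), C k = c ⟨k, h⟩ := fun k h => dif_pos h
  refine ⟨C, ?_, ?_⟩
  · obtain ⟨i, hi⟩ := Function.ne_iff.1 hc0
    exact ⟨i.1, i.2, by rw [hCΛ i.1 i.2]; simpa using hi⟩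
  · intro n hn
    apply deriv_vanish Λ C N _ n hn
    apply reduce i0 Λ lam hsphere C N
    intro β hβ1 hβ2
    have hβS : β ∈ Sfin := (hmem β).2 ⟨hβ1, hβ2⟩
    have := hker ⟨β, hβS⟩
    rw [← this]
    rw [← Finset.sum_attach Λ (fun k => C k * ∏ j, ((k j : ℝ) : ℂ) ^ (β j))]
    exact Finset.sum_congr rfl (fun k _ => by rw [hCΛ k.1 k.2])
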